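/- Let E and G be finite nonempty sets, u : E × G → E a map, q a probability vector on G, λ > 0, t ≥ 0 and k ∈ E. Let (Ω, 𝓕, ℙ) be a probability space carrying an i.i.d. sequence (Y_n)_{n≥1} of G-valued random variables with distribution q and an ℕ-valued random variable N which is independent of the sequence (Y_n) and has Poisson distribution with parameter λt. Define X_0 = k, X_n = u(X_{n−1}, Y_n). Then for every f : E → ℝ, E[f(X_N)] = ∑_{j∈E} (exp(tR))_{kj} f(j), where R = λ(P − I) and P is the stochastic matrix with entries P_{ij} = ∑_{g∈G, u(i,g)=j} q_g. -/

import Mathlib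

open MeasureTheory ProbabilityTheory

lemma expMat_smul_one {E : Type*} [Fintype E] [DecidableEq E] (r : ℝ) :
    NormedSpace.exp (r • (1 : Matrix E E ℝ)) = Real.exp r • (1 : Matrix E E ℝ) := by
  have h1 : r • (1 : Matrix E E ℝ) = Matrix.diagonal (fun _ => r) := by
    ext i j
    by_cases h : i = j <;> simp [Matrix.one_apply, h]
  rw [h1, Matrix.exp_diagonal]
  ext i j
  by_cases h : i = j <;> simp [Matrix.one_apply, h, ← Real.exp_eq_exp_ℝ]

lemma expMat_eq {E : Type*} [Fintype E] [DecidableEq E]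
    (P : Matrix E E ℝ) (r : ℝ) :
    NormedSpace.exp (r • (P - 1)) = Real.exp (-r) • NormedSpace.exp (r • P) := by
  have h1 : r • (P - 1) = (-r) • (1 : Matrix E E ℝ) + r • P := by
    rw [smul_sub, sub_eq_add_neg, add_comm, neg_smul]
  have h2 := Matrix.exp_add_of_commute ((-r) • (1 : Matrix E E ℝ)) (r • P)
      ((Commute.one_left (r • P)).smul_left (-r))
  rw [h1, h2, expMat_smul_one, smul_mul_assoc, one_mul]

lemma hasSum_expMat_entry {E : Type*} [Fintype E] [DecidableEq E] (P : Matrix E E ℝ)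
    (hP : ∀ (m : ℕ) (i j : E), |(P ^ m) i j| ≤ 1) (r : ℝ) (k j : E) :
    HasSum (fun m : ℕ => r ^ m / m.factorial * (P ^ m) k j)
      ((NormedSpace.exp (r • P)) k j) := by
  have hentry : ∀ (m : ℕ) (a b : E),
      ((m.factorial : ℝ)⁻¹ • (r • P) ^ m) a b = r ^ m / m.factorial * (P ^ m) a b := by
    intro m a b
    rw [smul_pow, Matrix.smul_apply, Matrix.smul_apply, smul_eq_mul, smul_eq_mul]
    ring
  have hsummand : ∀ a b : E,
      Summable (fun m : ℕ => ((m.factorial : ℝ)⁻¹ • (r • P) ^ m) a b) := by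
    intro a b
    apply Summable.of_abs
    apply Summable.of_nonneg_of_le (fun m => abs_nonneg _) ?_
      (Real.summable_pow_div_factorial |r|)
    intro m
    rw [hentry m a b, abs_mul, abs_div, abs_pow, Nat.abs_cast]
    have h1 := hP m a b
    have h2 : (0:ℝ) ≤ |r| ^ m / m.factorial := by positivity
    nlinarith [abs_nonneg ((P ^ m) a b)]
  have hsum : Summable (fun m : ℕ => (m.factorial : ℝ)⁻¹ • (r • P) ^ m) := by
    apply Pi.summable.mpr
    intro a
    apply Pi.summable.mpr
    intro b
    exact hsummand a b
  have H : HasSum (fun m : ℕ => (m.factorial : ℝ)⁻¹ • (r • P) ^ m)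
      (NormedSpace.exp (r • P)) := by
    rw [NormedSpace.exp_eq_tsum (𝕂 := ℝ)]
    exact hsum.hasSum
  have H1 := Pi.hasSum.mp (Pi.hasSum.mp H k) j
  have hfg : (fun m : ℕ => ((m.factorial : ℝ)⁻¹ • (r • P) ^ m) k j)
      = fun m : ℕ => r ^ m / m.factorial * (P ^ m) k j := funext fun m => hentry m k j
  rwa [hfg] at H1

lemma stoch_pow {E : Type*} [Fintype E] [DecidableEq E] (P : Matrix E E ℝ)
    (h0 : ∀ i j, 0 ≤ P i j) (h1 : ∀ i, ∑ j, P i j = 1) (m : ℕ) :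
    (∀ i j, 0 ≤ (P ^ m) i j) ∧ (∀ i, ∑ j, (P ^ m) i j = 1) := by
  induction m with
  | zero =>
    constructor
    · intro i j
      by_cases h : i = j <;> simp [Matrix.one_apply, h]
    · intro i
      simp [Matrix.one_apply]
  | succ m ih =>
    obtain ⟨ih0, ih1⟩ := ih
    constructor
    · intro i j
      rw [pow_succ, Matrix.mul_apply]
      exact Finset.sum_nonneg fun l _ => mul_nonneg (ih0 i l) (h0 l j)
    · intro i
      simp_rw [pow_succ, Matrix.mul_apply]
      rw [Finset.sum_comm]
      simp_rw [← Finset.mul_sum, h1]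
      simpa using ih1 i

lemma stoch_pow_abs {E : Type*} [Fintype E] [DecidableEq E] (P : Matrix E E ℝ)
    (h0 : ∀ i j, 0 ≤ P i j) (h1 : ∀ i, ∑ j, P i j = 1) (m : ℕ) (i j : E) :
    |(P ^ m) i j| ≤ 1 := by
  obtain ⟨hp0, hp1⟩ := stoch_pow P h0 h1 m
  rw [abs_of_nonneg (hp0 i j)]
  calc (P ^ m) i j ≤ ∑ j', (P ^ m) i j' :=
        Finset.single_le_sum (fun j' _ => hp0 i j') (Finset.mem_univ j)
    _ = 1 := hp1 i

def chainMap {E G : Type*} (u : E × G → E) (k : E) : ℕ → (ℕ → G) → E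
  | 0, _ => k
  | n+1, y => u (chainMap u k n y, y n)

lemma chainMap_congr {E G : Type*} (u : E × G → E) (k : E) :
    ∀ (m : ℕ) (y y' : ℕ → G), (∀ n, n < m → y n = y' n) →
      chainMap u k m y = chainMap u k m y'
  | 0, _, _, _ => rfl
  | m+1, y, y', h => by
    rw [chainMap, chainMap,
      chainMap_congr u k m y y' (fun n hn => h n (hn.trans (Nat.lt_succ_self m))),
      h m (Nat.lt_succ_self m)]


theorem stmt7 {E G : Type*} [Fintype E] [Fintype G] [Nonempty E] [Nonempty G]
    [DecidableEq E] [DecidableEq G]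
    [mG : MeasurableSpace G] [MeasurableSingletonClass G]
    (u : E × G → E) (q : G → ℝ) (hq0 : ∀ g, 0 ≤ q g) (hq1 : ∑ g, q g = 1)
    (l t : ℝ) (hl : 0 < l) (ht : 0 ≤ t) (k : E)
    {Ω : Type*} [MeasurableSpace Ω] (μ : Measure Ω) [IsProbabilityMeasure μ]
    (Y : ℕ → Ω → G) (hYmeas : ∀ n, Measurable (Y n))
    (hYindep : iIndepFun Y μ)
    (hYlaw : ∀ n g, μ {ω | Y n ω = g} = ENNReal.ofReal (q g))
    (N : Ω → ℕ) (hNmeas : Measurable N)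
    (hNindep : IndepFun N (fun ω (n : ℕ) => Y n ω) μ)
    (hNlaw : ∀ m : ℕ, μ {ω | N ω = m}
      = ENNReal.ofReal (Real.exp (-(l * t)) * (l * t) ^ m / m.factorial))
    (X : ℕ → Ω → E) (hX0 : ∀ ω, X 0 ω = k)
    (hX : ∀ n ω, X (n + 1) ω = u (X n ω, Y n ω)) :
    ∀ f : E → ℝ,
      ∫ ω, f (X (N ω) ω) ∂μ =
        ∑ j, (NormedSpace.exp
          (t • (l • ((Matrix.of fun i j' => ∑ g, if u (i, g) = j' then q g else 0) - 1))))
            k j * f j := by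
  intro f
  letI : MeasurableSpace E := ⊤
  haveI : MeasurableSingletonClass E := ⟨fun _ => trivial⟩
  set P : Matrix E E ℝ := Matrix.of fun i j' => ∑ g, if u (i, g) = j' then q g else 0 with hPdef
  have hP0 : ∀ i j, 0 ≤ P i j := by
    intro i j
    exact Finset.sum_nonneg fun g _ => by split <;> [exact hq0 g; exact le_rfl]
  have hP1 : ∀ i, ∑ j, P i j = 1 := by
    intro i
    rw [show ∑ j, P i j = ∑ j, ∑ g, if u (i, g) = j then q g else 0 from rfl,
      Finset.sum_comm]
    rw [← hq1]
    refine Finset.sum_congr rfl fun g _ => ?_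
    simp
  -- X m as a function of the first m coordinates of Y
  have hXΦ : ∀ m ω, X m ω = chainMap u k m (fun n => Y n ω) := by
    intro m
    induction m with
    | zero => intro ω; rw [hX0]; rfl
    | succ m ih => intro ω; rw [hX, ih, chainMap]
  set Ψ : (m : ℕ) → ({i // i ∈ Finset.range m} → G) → E :=
    fun m v => chainMap u k m
      (fun n => if h : n ∈ Finset.range m then v ⟨n, h⟩ else Classical.arbitrary G) with hΨdef
  have hΨmeas : ∀ m, Measurable (Ψ m) := fun m => measurable_of_countable _
  have hXeq : ∀ m, X m = fun ω => Ψ m (fun i => Y (i : ℕ) ω) := by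
    intro m
    funext ω
    rw [hXΦ m ω]
    exact chainMap_congr u k m _ _ (fun n hn => by simp [Finset.mem_range.mpr hn])
  have hXmeas : ∀ m, Measurable (X m) := by
    intro m
    rw [hXeq m]
    exact (hΨmeas m).comp (measurable_pi_lambda _ fun i => hYmeas i)
  have hfmeas : ∀ (φ : E → ℝ), Measurable φ := fun φ => measurable_of_countable φ
  -- independence of X m and Y m
  have hindep1 : ∀ m, IndepFun (X m) (Y m) μ := by
    intro m
    have h := hYindep.indepFun_finset (Finset.range m) {m}
      (by simp [Finset.disjoint_left]; omega) hYmeas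
    have h2 := h.comp (hΨmeas m)
      (measurable_pi_apply (⟨m, Finset.mem_singleton_self m⟩ : {i // i ∈ ({m} : Finset ℕ)}))
    rw [hXeq m]
    exact h2
  -- integral formula for functions of X m
  have hint : ∀ m (φ : E → ℝ), ∫ ω, φ (X m ω) ∂μ
      = ∑ i, (μ (X m ⁻¹' {i})).toReal * φ i := by
    intro m φ
    haveI := Measure.isProbabilityMeasure_map (μ := μ) (hXmeas m).aemeasurable
    rw [← integral_map (hXmeas m).aemeasurable (hfmeas φ).aestronglyMeasurable,
      integral_fintype (Integrable.of_finite)]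
    refine Finset.sum_congr rfl fun i _ => ?_
    rw [measureReal_def, Measure.map_apply (hXmeas m) (measurableSet_singleton i), smul_eq_mul]
  have hint2 : ∀ m (F : E × G → ℝ), ∫ ω, F (X m ω, Y m ω) ∂μ
      = ∑ p : E × G, (μ (X m ⁻¹' {p.1} ∩ Y m ⁻¹' {p.2})).toReal * F p := by
    intro m F
    have hZ : Measurable (fun ω => (X m ω, Y m ω)) := (hXmeas m).prodMk (hYmeas m)
    haveI := Measure.isProbabilityMeasure_map (μ := μ) hZ.aemeasurable
    rw [← integral_map hZ.aemeasurable (measurable_of_countable F).aestronglyMeasurable,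
      integral_fintype (Integrable.of_finite)]
    refine Finset.sum_congr rfl fun p _ => ?_
    have hset : (fun ω => (X m ω, Y m ω)) ⁻¹' {p} = X m ⁻¹' {p.1} ∩ Y m ⁻¹' {p.2} := by
      ext ω
      simp [Prod.ext_iff]
    rw [measureReal_def, Measure.map_apply hZ (measurableSet_singleton p), hset, smul_eq_mul]
  -- law of X m
  have hlaw : ∀ m (φ : E → ℝ), ∫ ω, φ (X m ω) ∂μ = ∑ i, (P ^ m) k i * φ i := by
    intro m
    induction m with
    | zero =>
      intro φ
      have e0 : ∀ ω, φ (X 0 ω) = φ k := fun ω => by rw [hX0]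
      rw [integral_congr_ae (ae_of_all μ e0)]
      simp [Matrix.one_apply]
    | succ m ih =>
      intro φ
      have e1 : ∀ ω, φ (X (m+1) ω) = (fun p : E × G => φ (u p)) (X m ω, Y m ω) :=
        fun ω => by rw [hX]
      have hψ : ∀ i : E, ∑ g, q g * φ (u (i, g)) = ∑ j, P i j * φ j := by
        intro i
        calc ∑ g, q g * φ (u (i, g))
            = ∑ g, ∑ j, if u (i, g) = j then q g * φ j else 0 := by
              refine Finset.sum_congr rfl fun g _ => ?_
              rw [Finset.sum_ite_eq Finset.univ (u (i, g)) (fun j => q g * φ j)]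
              simp
          _ = ∑ j, ∑ g, if u (i, g) = j then q g * φ j else 0 := Finset.sum_comm
          _ = ∑ j, P i j * φ j := by
              refine Finset.sum_congr rfl fun j _ => ?_
              rw [hPdef, Matrix.of_apply, Finset.sum_mul]
              refine Finset.sum_congr rfl fun g _ => ?_
              rw [ite_mul, zero_mul]
      calc ∫ ω, φ (X (m+1) ω) ∂μ
          = ∫ ω, (fun p : E × G => φ (u p)) (X m ω, Y m ω) ∂μ :=
            integral_congr_ae (ae_of_all μ e1)
        _ = ∑ p : E × G, (μ (X m ⁻¹' {p.1} ∩ Y m ⁻¹' {p.2})).toReal * φ (u p) := by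
            have h := hint2 m (fun p => φ (u p))
            simpa using h
        _ = ∑ i, ∑ g, (μ (X m ⁻¹' {i})).toReal * (q g * φ (u (i, g))) := by
            rw [Fintype.sum_prod_type]
            refine Finset.sum_congr rfl fun i _ => Finset.sum_congr rfl fun g _ => ?_
            rw [(hindep1 m).measure_inter_preimage_eq_mul _ _ (measurableSet_singleton i)
              (measurableSet_singleton g), ENNReal.toReal_mul]
            have hy : Y m ⁻¹' {g} = {ω | Y m ω = g} := rfl
            rw [hy, hYlaw m g, ENNReal.toReal_ofReal (hq0 g)]
            ring
        _ = ∑ i, (μ (X m ⁻¹' {i})).toReal * (∑ g, q g * φ (u (i, g))) := by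
            refine Finset.sum_congr rfl fun i _ => ?_
            rw [Finset.mul_sum]
        _ = ∫ ω, (fun i => ∑ g, q g * φ (u (i, g))) (X m ω) ∂μ := by
            have h := hint m (fun i => ∑ g, q g * φ (u (i, g)))
            rw [h]
        _ = ∑ i, (P ^ m) k i * (∑ g, q g * φ (u (i, g))) := by
            have h := ih (fun i => ∑ g, q g * φ (u (i, g)))
            simpa using h
        _ = ∑ j, (P ^ (m+1)) k j * φ j := by
            simp_rw [hψ, pow_succ, Matrix.mul_apply, Finset.sum_mul, Finset.mul_sum]
            rw [Finset.sum_comm]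
            exact Finset.sum_congr rfl fun j _ => Finset.sum_congr rfl fun x _ => by ring
  -- independence of N and X m
  have hNX : ∀ m, IndepFun N (X m) μ := by
    intro m
    have hres : Measurable (fun (y : ℕ → G) (i : {i // i ∈ Finset.range m}) => y (i : ℕ)) :=
      measurable_pi_lambda _ fun i => measurable_pi_apply _
    have h2 := hNindep.comp measurable_id ((hΨmeas m).comp hres)
    rw [hXeq m]
    exact h2
  have hmeasN : ∀ m : ℕ, MeasurableSet {ω | N ω = m} :=
    fun m => hNmeas (measurableSet_singleton m)
  have hhmeas : Measurable (fun ω => f (X (N ω) ω)) := by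
    have h1 : Measurable (fun p : Ω × ℕ => f (X p.2 p.1)) :=
      measurable_from_prod_countable_left fun m => (hfmeas f).comp (hXmeas m)
    exact h1.comp (measurable_id.prodMk hNmeas)
  have hbound : ∀ x : E, ‖f x‖ ≤ ∑ i, |f i| := fun x =>
    Finset.single_le_sum (f := fun i => |f i|) (fun i _ => abs_nonneg _) (Finset.mem_univ x)
  have hintg : Integrable (fun ω => f (X (N ω) ω)) μ :=
    Integrable.mono' (integrable_const _) hhmeas.aestronglyMeasurable
      (ae_of_all μ fun ω => hbound _)
  have hiUnion : (⋃ m : ℕ, {ω | N ω = m}) = Set.univ := by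
    ext ω; simp
  have hdisj : Pairwise (Function.onFun Disjoint fun m : ℕ => {ω | N ω = m}) := by
    intro a b hab
    simp only [Function.onFun, Set.disjoint_left]
    intro ω ha hb
    exact hab ((show N ω = a from ha).symm.trans hb)
  have hsplit : ∫ ω, f (X (N ω) ω) ∂μ
      = ∑' m : ℕ, ∫ ω in {ω | N ω = m}, f (X (N ω) ω) ∂μ := by
    rw [← setIntegral_univ, ← hiUnion, integral_iUnion hmeasN hdisj hintg.integrableOn]
  have hterm : ∀ m : ℕ, ∫ ω in {ω | N ω = m}, f (X (N ω) ω) ∂μ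
      = (μ {ω | N ω = m}).toReal * ∑ j, (P ^ m) k j * f j := by
    intro m
    have e1 : ∫ ω in {ω | N ω = m}, f (X (N ω) ω) ∂μ = ∫ ω in {ω | N ω = m}, f (X m ω) ∂μ :=
      setIntegral_congr_fun (hmeasN m) (fun ω hω => by rw [show N ω = m from hω])
    haveI : IsFiniteMeasure ((μ.restrict {ω | N ω = m}).map (X m)) :=
      Measure.isFiniteMeasure_map _ _
    have e2 : ∫ ω in {ω | N ω = m}, f (X m ω) ∂μ
        = ∑ i, (μ ({ω | N ω = m} ∩ X m ⁻¹' {i})).toReal * f i := by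
      rw [← integral_map (hXmeas m).aemeasurable (hfmeas f).aestronglyMeasurable,
        integral_fintype (Integrable.of_finite)]
      refine Finset.sum_congr rfl fun i _ => ?_
      rw [measureReal_def, Measure.map_apply (hXmeas m) (measurableSet_singleton i),
        Measure.restrict_apply ((hXmeas m) (measurableSet_singleton i)),
        smul_eq_mul, Set.inter_comm]
    have key : ∀ i : E, (μ ({ω | N ω = m} ∩ X m ⁻¹' {i})).toReal
        = (μ {ω | N ω = m}).toReal * (μ (X m ⁻¹' {i})).toReal := by
      intro i
      rw [show {ω | N ω = m} = N ⁻¹' {m} from rfl,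
        (hNX m).measure_inter_preimage_eq_mul _ _ (measurableSet_singleton m)
          (measurableSet_singleton i), ENNReal.toReal_mul]
    calc ∫ ω in {ω | N ω = m}, f (X (N ω) ω) ∂μ
        = ∑ i, (μ ({ω | N ω = m} ∩ X m ⁻¹' {i})).toReal * f i := by rw [e1, e2]
      _ = (μ {ω | N ω = m}).toReal * ∑ i, (μ (X m ⁻¹' {i})).toReal * f i := by
          rw [Finset.mul_sum]
          exact Finset.sum_congr rfl fun i _ => by rw [key i]; ring
      _ = (μ {ω | N ω = m}).toReal * ∑ j, (P ^ m) k j * f j := by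
          rw [← hint m f, hlaw m f]
  -- the exponential side
  have hlt : (0:ℝ) ≤ l * t := mul_nonneg hl.le ht
  have hrt : t • (l • (P - 1)) = (l * t) • (P - 1) := by
    rw [smul_smul, mul_comm]
  have hPabs := stoch_pow_abs P hP0 hP1
  have hexp : ∀ j, (NormedSpace.exp (t • (l • (P - 1)))) k j
      = Real.exp (-(l * t)) * ((NormedSpace.exp ((l * t) • P)) k j) := by
    intro j
    rw [hrt, expMat_eq, Matrix.smul_apply, smul_eq_mul]
  have hterm2 : ∀ j, HasSum
      (fun m : ℕ => Real.exp (-(l * t)) * ((l * t) ^ m / m.factorial * (P ^ m) k j) * f j)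
      (Real.exp (-(l * t)) * (NormedSpace.exp ((l * t) • P)) k j * f j) :=
    fun j => ((hasSum_expMat_entry P hPabs (l * t) k j).mul_left _).mul_right _
  have hc : ∀ m : ℕ, (μ {ω | N ω = m}).toReal
      = Real.exp (-(l * t)) * (l * t) ^ m / m.factorial := by
    intro m
    rw [hNlaw m, ENNReal.toReal_ofReal]
    exact div_nonneg (mul_nonneg (Real.exp_pos _).le (pow_nonneg hlt m)) (Nat.cast_nonneg _)
  have hRHS : ∑ j, (NormedSpace.exp (t • (l • (P - 1)))) k j * f j
      = ∑' m : ℕ, ∑ j, Real.exp (-(l * t)) * ((l * t) ^ m / m.factorial * (P ^ m) k j) * f j := by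
    rw [Summable.tsum_finsetSum (fun j _ => (hterm2 j).summable)]
    refine Finset.sum_congr rfl fun j _ => ?_
    rw [hexp j, (hterm2 j).tsum_eq]
  rw [hsplit, hRHS]
  refine tsum_congr fun m => ?_
  rw [hterm m, hc m, Finset.mul_sum]
  exact Finset.sum_congr rfl fun j _ => by ring
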